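/- The direct limit of the system of abelian groups G_l = ℤ/Nℤ ⊕ ℤ ⊕ ℤ with identical connecting homomorphisms L : G_l → G_{l+1} given by the matrix L = [[1,0,0],[0,0,0],[0,1,1]] (i.e., L(g, m, k) = (g, 0, m + k)) is isomorphic to ℤ/Nℤ ⊕ ℤ. -/

import Mathlib

open CategoryTheory Limits

/-- The connecting homomorphism `L : ℤ/Nℤ ⊕ ℤ ⊕ ℤ → ℤ/Nℤ ⊕ ℤ ⊕ ℤ`,
`(g, m, k) ↦ (g, 0, m + k)`, given by the matrix `[[1,0,0],[0,0,0],[0,1,1]]`. -/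
def Lmap (N : ℕ) : (ZMod N × ℤ × ℤ) →+ (ZMod N × ℤ × ℤ) :=
  AddMonoidHom.mk' (fun p => (p.1, 0, p.2.1 + p.2.2)) (by
    intro a b
    refine Prod.ext ?_ (Prod.ext ?_ ?_) <;> simp <;> ring)

/-- Projection `(g, m, k) ↦ (g, m + k)`. -/
def psiMap (N : ℕ) : (ZMod N × ℤ × ℤ) →+ (ZMod N × ℤ) :=
  AddMonoidHom.mk' (fun p => (p.1, p.2.1 + p.2.2)) (by
    intro a b
    refine Prod.ext ?_ ?_ <;> simp <;> ring)

/-- Inclusion `(g, k) ↦ (g, 0, k)`. -/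
def jMap (N : ℕ) : (ZMod N × ℤ) →+ (ZMod N × ℤ × ℤ) :=
  AddMonoidHom.mk' (fun q => (q.1, 0, q.2)) (by
    intro a b
    refine Prod.ext ?_ (Prod.ext ?_ ?_) <;> simp)

noncomputable abbrev Fseq (N : ℕ) : ℕ ⥤ AddCommGrpCat :=
  Functor.ofSequence (X := fun _ : ℕ => AddCommGrpCat.of (ZMod N × ℤ × ℤ))
    (fun _ => AddCommGrpCat.ofHom (Lmap N))

/-- The candidate colimit cocone. -/
noncomputable def myCocone (N : ℕ) : Cocone (Fseq N) where
  pt := AddCommGrpCat.of (ZMod N × ℤ)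
  ι := NatTrans.ofSequence (fun _ => AddCommGrpCat.ofHom (psiMap N)) (by
    intro n
    simp only [Functor.ofSequence_map_homOfLE_succ, Functor.const_obj_map, Category.comp_id]
    ext x
    show psiMap N (Lmap N x) = psiMap N x
    simp [psiMap, Lmap, AddMonoidHom.mk'])

lemma cocone_app_zero {N : ℕ} (s : Cocone (Fseq N)) (n : ℕ) (x : ZMod N × ℤ × ℤ) :
    s.ι.app n (x.1, 0, x.2.1 + x.2.2) = s.ι.app 0 (x.1, 0, x.2.1 + x.2.2) := by
  induction n with
  | zero => rfl
  | succ m ih =>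
    rw [← ih]
    have h := s.ι.naturality (homOfLE (m.le_add_right 1))
    simp only [Functor.const_obj_map, Category.comp_id,
      Functor.ofSequence_map_homOfLE_succ] at h
    have h' : s.ι.app (m+1) (Lmap N (x.1, 0, x.2.1 + x.2.2))
        = s.ι.app m (x.1, 0, x.2.1 + x.2.2) := ConcreteCategory.congr_hom h _
    rw [← h']
    congr 1
    simp [Lmap, AddMonoidHom.mk']
    rfl

noncomputable def myIsColimit (N : ℕ) : IsColimit (myCocone N) where
  desc s := AddCommGrpCat.ofHom ((s.ι.app 0).hom.comp (jMap N))
  fac s n := by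
    ext x
    show s.ι.app 0 (jMap N (psiMap N x)) = s.ι.app n x
    have h := s.ι.naturality (homOfLE (n.le_add_right 1))
    simp only [Functor.const_obj_map, Category.comp_id,
      Functor.ofSequence_map_homOfLE_succ] at h
    have h' : s.ι.app (n+1) (Lmap N x) = s.ι.app n x := ConcreteCategory.congr_hom h _
    rw [← h']
    have := cocone_app_zero s (n+1) x
    simp only [Lmap, psiMap, jMap, AddMonoidHom.mk'] at *
    exact this.symm
  uniq s m hm := by
    ext q
    show m q = s.ι.app 0 (jMap N q)
    conv_rhs => rw [← hm 0]
    show m q = m (psiMap N (jMap N q))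
    congr 1
    show q = (q.1, 0 + q.2)
    simp
    rfl

theorem stmt10 (N : ℕ) (hN : 0 < N) :
    Nonempty
      (colimit (Functor.ofSequence
          (X := fun _ : ℕ => AddCommGrpCat.of (ZMod N × ℤ × ℤ))
          (fun _ => AddCommGrpCat.ofHom (Lmap N))) ≅
        AddCommGrpCat.of (ZMod N × ℤ)) := by
  exact ⟨colimit.isoColimitCocone ⟨myCocone N, myIsColimit N⟩⟩
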